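/- Let r ≥ 2 be an integer, let a ≥ 0 and b ≥ 0 be real numbers, and set n = r(b + 1 + (a/2)(r−1)). If μ > 0 satisfies ∏_{j=1}^r [Γ(μ+1+(j−1)a/2) · Γ(b+2+(r+j−2)a/2)] / [Γ(1+(j−1)a/2) · Γ(μ+b+2+(r+j−2)a/2)] = μ^n/(n+1) (with μ^n the real power μ^n), then μ < 1. -/

import Mathlib

open Real Finset

lemma gamma_four_point {A B x y : ℝ} (hA : 0 < A) (hx : A ≤ x) (hy : A ≤ y)
    (hsum : x + y = A + B) :
    Real.Gamma x * Real.Gamma y ≤ Real.Gamma A * Real.Gamma B := by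
  have hB : A ≤ B := by linarith
  have hBpos : 0 < B := lt_of_lt_of_le hA hB
  have hxpos : 0 < x := lt_of_lt_of_le hA hx
  have hypos : 0 < y := lt_of_lt_of_le hA hy
  rcases eq_or_lt_of_le hx with h | h
  · have hyB : y = B := by linarith
    rw [← h, hyB]
  · have hD : 0 < B - A := by linarith
    set θ : ℝ := (x - A) / (B - A) with hθ
    have hθ0 : 0 < θ := div_pos (by linarith) hD
    have hθ1 : θ ≤ 1 := by
      rw [div_le_one hD]; linarith
    have h1θ : 0 ≤ 1 - θ := by linarith
    have hxeq : (1 - θ) * A + θ * B = x := by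
      have hm : θ * (B - A) = x - A := by rw [hθ]; field_simp [hD.ne']
      linarith [hm]
    have hyeq : θ * A + (1 - θ) * B = y := by
      have : θ * (B - A) = x - A := by rw [hθ]; field_simp [hD.ne']
      nlinarith [this]
    have hc := Real.convexOn_log_Gamma.2 (Set.mem_Ioi.mpr hA) (Set.mem_Ioi.mpr hBpos)
      h1θ (le_of_lt hθ0) (by ring)
    have hc' := Real.convexOn_log_Gamma.2 (Set.mem_Ioi.mpr hA) (Set.mem_Ioi.mpr hBpos)
      (le_of_lt hθ0) h1θ (by ring)
    simp only [Function.comp, smul_eq_mul] at hc hc'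
    rw [hxeq] at hc
    rw [hyeq] at hc'
    have hlog : Real.log (Real.Gamma x) + Real.log (Real.Gamma y) ≤
        Real.log (Real.Gamma A) + Real.log (Real.Gamma B) := by linarith
    have gxpos := Real.Gamma_pos_of_pos hxpos
    have gypos := Real.Gamma_pos_of_pos hypos
    have gApos := Real.Gamma_pos_of_pos hA
    have gBpos := Real.Gamma_pos_of_pos hBpos
    rw [← Real.log_mul (ne_of_gt gxpos) (ne_of_gt gypos),
        ← Real.log_mul (ne_of_gt gApos) (ne_of_gt gBpos)] at hlog
    exact (Real.log_le_log_iff (by positivity) (by positivity)).mp hlog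

lemma factor_le {p q μ : ℝ} (hp : 0 < p) (hpq : p ≤ q) (hμ : 1 ≤ μ) :
    Real.Gamma (μ + p) * Real.Gamma q / (Real.Gamma p * Real.Gamma (μ + q)) ≤ p / q := by
  have hq : 0 < q := lt_of_lt_of_le hp hpq
  have h4 := gamma_four_point (A := 1 + p) (B := μ + q) (x := μ + p) (y := 1 + q)
    (by linarith) (by linarith) (by linarith) (by ring)
  rw [show (1:ℝ) + q = q + 1 by ring, show (1:ℝ) + p = p + 1 by ring,
    Real.Gamma_add_one (ne_of_gt hq), Real.Gamma_add_one (ne_of_gt hp)] at h4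
  have gp := Real.Gamma_pos_of_pos hp
  have gq := Real.Gamma_pos_of_pos hq
  have gmp := Real.Gamma_pos_of_pos (show (0:ℝ) < μ + p by linarith)
  have gmq := Real.Gamma_pos_of_pos (show (0:ℝ) < μ + q by linarith)
  rw [div_le_div_iff₀ (by positivity) hq]
  nlinarith [h4]

lemma prod_ineq (m : ℕ) (hm : 1 ≤ m) (t s : ℝ) (ht : 0 ≤ t)
    (hs : 1 + (m : ℝ) * t ≤ s) :
    (((m : ℝ) + 1) * s + 1) * ∏ j ∈ Finset.range (m + 1), (1 + (j : ℝ) * t) <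
      ∏ j ∈ Finset.range (m + 1), (1 + (j : ℝ) * t + s) := by
  have hmr : (1:ℝ) ≤ (m:ℝ) := by exact_mod_cast hm
  have hs1 : (1:ℝ) ≤ s := by nlinarith
  have hP : ∀ j : ℕ, (0:ℝ) < 1 + (j : ℝ) * t := fun j => by positivity
  rw [Finset.prod_range_succ', Finset.prod_range_succ']
  simp only [Nat.cast_add, Nat.cast_one, Nat.cast_zero, zero_mul, add_zero, mul_one]
  have h1 : ∏ j ∈ Finset.range m, (1 + ((j:ℝ)+1) * t + s) ≥
      ∏ j ∈ Finset.range m, 2 * (1 + ((j:ℝ)+1) * t) := by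
    apply Finset.prod_le_prod
    · intro j _; positivity
    · intro j hj
      have hjm : (j : ℝ) + 1 ≤ (m : ℝ) := by
        exact_mod_cast Nat.succ_le_of_lt (Finset.mem_range.mp hj)
      nlinarith [hP (j+1), ht]
  rw [Finset.prod_mul_distrib, Finset.prod_const, Finset.card_range] at h1
  set P : ℝ := ∏ j ∈ Finset.range m, (1 + ((j:ℝ)+1) * t) with hPdef
  have hPpos : 0 < P := Finset.prod_pos fun j _ => by positivity
  have h2m : (m : ℝ) + 1 ≤ 2 ^ m := by
    exact_mod_cast Nat.succ_le_of_lt (show m < 2 ^ m from Nat.lt_two_pow_self)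
  have hm1 : (2:ℝ) ≤ (m:ℝ) + 1 := by exact_mod_cast Nat.succ_le_succ hm
  have key : ((m : ℝ) + 1) * s + 1 < (1 + s) * 2 ^ m := by
    have h0 : ((m:ℝ)+1) * s + 1 < (1 + s) * ((m:ℝ)+1) := by nlinarith
    have h1' : (1 + s) * ((m:ℝ)+1) ≤ (1 + s) * 2 ^ m := by nlinarith
    linarith
  calc (((m : ℝ) + 1) * s + 1) * P < (1 + s) * 2 ^ m * P := by nlinarith
    _ = 2 ^ m * P * (1 + s) := by ring
    _ ≤ (∏ j ∈ Finset.range m, (1 + ((j:ℝ)+1) * t + s)) * (1 + s) := by nlinarith [h1, hs1]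

theorem stmt_18 (r : ℕ) (hr : 2 ≤ r) (a b : ℝ) (ha : 0 ≤ a) (hb : 0 ≤ b)
    (n : ℝ) (hn : n = (r : ℝ) * (b + 1 + (a / 2) * ((r : ℝ) - 1)))
    (μ : ℝ) (hμ : 0 < μ)
    (heq : (∏ j ∈ Finset.range r,
        (Real.Gamma (μ + 1 + (j : ℝ) * (a / 2)) *
            Real.Gamma (b + 2 + ((r : ℝ) - 1 + (j : ℝ)) * (a / 2))) /
          (Real.Gamma (1 + (j : ℝ) * (a / 2)) *
            Real.Gamma (μ + b + 2 + ((r : ℝ) - 1 + (j : ℝ)) * (a / 2)))) =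
      μ ^ n / (n + 1)) :
    μ < 1 := by
  by_contra hlt
  push_neg at hlt
  set t := a / 2 with htdef
  have ht0 : 0 ≤ t := by positivity
  obtain ⟨m, rfl⟩ : ∃ m, r = m + 1 := ⟨r - 1, by omega⟩
  have hm : 1 ≤ m := by omega
  have hmr : (1:ℝ) ≤ (m:ℝ) := by exact_mod_cast hm
  set s : ℝ := b + 1 + (m : ℝ) * t with hsdef
  have hs1 : (1:ℝ) ≤ s := by nlinarith
  have hcast : ((m + 1 : ℕ) : ℝ) = (m : ℝ) + 1 := by push_cast; ring
  have hn' : n = ((m:ℝ) + 1) * s := by rw [hn, hcast, hsdef, htdef]; ring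
  have hn0 : 0 ≤ n := by nlinarith
  have hn1 : 0 < n + 1 := by linarith
  have heq' : (∏ j ∈ Finset.range (m + 1),
      (Real.Gamma (μ + (1 + (j:ℝ) * t)) * Real.Gamma ((1 + (j:ℝ) * t) + s)) /
        (Real.Gamma (1 + (j:ℝ) * t) * Real.Gamma (μ + ((1 + (j:ℝ) * t) + s)))) =
      μ ^ n / (n + 1) := by
    rw [← heq]
    apply Finset.prod_congr rfl
    intro j _
    have e1 : μ + 1 + (j:ℝ) * t = μ + (1 + (j:ℝ) * t) := by ring
    have e3 : b + 2 + (((m + 1 : ℕ) : ℝ) - 1 + (j:ℝ)) * t = (1 + (j:ℝ) * t) + s := by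
      rw [hsdef, hcast]; ring
    have e2 : μ + b + 2 + (((m + 1 : ℕ) : ℝ) - 1 + (j:ℝ)) * t =
        μ + ((1 + (j:ℝ) * t) + s) := by rw [hsdef, hcast]; ring
    rw [e1, e2, e3]
  have hbound : (∏ j ∈ Finset.range (m + 1),
      (Real.Gamma (μ + (1 + (j:ℝ) * t)) * Real.Gamma ((1 + (j:ℝ) * t) + s)) /
        (Real.Gamma (1 + (j:ℝ) * t) * Real.Gamma (μ + ((1 + (j:ℝ) * t) + s)))) ≤
      ∏ j ∈ Finset.range (m + 1), (1 + (j:ℝ) * t) / (1 + (j:ℝ) * t + s) := by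
    apply Finset.prod_le_prod
    · intro j _
      have hp : (0:ℝ) < 1 + (j:ℝ) * t := by positivity
      have g1 := Real.Gamma_pos_of_pos (show (0:ℝ) < μ + (1 + (j:ℝ) * t) by linarith)
      have g2 := Real.Gamma_pos_of_pos (show (0:ℝ) < (1 + (j:ℝ) * t) + s by linarith)
      have g3 := Real.Gamma_pos_of_pos hp
      have g4 := Real.Gamma_pos_of_pos
        (show (0:ℝ) < μ + ((1 + (j:ℝ) * t) + s) by linarith)
      positivity
    · intro j hj
      exact factor_le (by positivity) (by nlinarith [mul_nonneg (Nat.cast_nonneg j) ht0]) hlt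
  rw [heq', Finset.prod_div_distrib] at hbound
  have hprod := prod_ineq m hm t s ht0 (by nlinarith)
  have hPpos : (0:ℝ) < ∏ j ∈ Finset.range (m+1), (1 + (j:ℝ) * t) :=
    Finset.prod_pos fun j _ => by positivity
  have hQpos : (0:ℝ) < ∏ j ∈ Finset.range (m+1), (1 + (j:ℝ) * t + s) := by
    apply Finset.prod_pos
    intro j _
    have : (0:ℝ) < 1 + (j:ℝ) * t := by positivity
    linarith
  have hfrac : (∏ j ∈ Finset.range (m+1), (1 + (j:ℝ) * t)) /
      (∏ j ∈ Finset.range (m+1), (1 + (j:ℝ) * t + s)) < 1 / (n + 1) := by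
    rw [div_lt_div_iff₀ hQpos hn1, hn']
    nlinarith [hprod]
  have hμn : (1:ℝ) ≤ μ ^ n := Real.one_le_rpow hlt hn0
  have hrhs : 1 / (n + 1) ≤ μ ^ n / (n + 1) := by gcongr
  linarith
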